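/- Let λ₁, λ₂, c₁, c₂, θ > 0 and define the closed-loop planar system η̇₁ = λ₂(1 - e^{η₂}), η̇₂ = λ₁(1 - e^{η₁}) + u* - u with feedback u = u* + λ₂[-c₂(e^{-z} - 1) - θc₁(e^{c₁η₁} - 1) + (λ₁/λ₂)(1 - e^{η₁}) - c₁(1 - e^{η₂})], where z = η₂ - c₁η₁. Then along trajectories, the Lyapunov function V₃(η) = θ(e^{-c₁η₁} - 1 + c₁η₁) + (e^z - 1 - z) satisfies V̇₃ = -4λ₂[θc₁ sinh²(c₁η₁/2) + c₂ sinh²(z/2)]. -/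

import Mathlib

theorem V3_derivative_along_trajectories
    (lam1 lam2 c1 c2 θ ustar : ℝ)
    (h1 : 0 < lam1) (h2 : 0 < lam2) (hc1 : 0 < c1) (hc2 : 0 < c2) (hθ : 0 < θ)
    (η1 η2 : ℝ → ℝ) (t : ℝ)
    (hd1 : HasDerivAt η1 (lam2 * (1 - Real.exp (η2 t))) t)
    (hd2 : HasDerivAt η2
      (lam1 * (1 - Real.exp (η1 t)) + ustar -
        (ustar + lam2 * (-c2 * (Real.exp (-(η2 t - c1 * η1 t)) - 1)
          - θ * c1 * (Real.exp (c1 * η1 t) - 1)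
          + lam1 / lam2 * (1 - Real.exp (η1 t))
          - c1 * (1 - Real.exp (η2 t))))) t) :
    HasDerivAt (fun s : ℝ =>
        θ * (Real.exp (-c1 * η1 s) - 1 + c1 * η1 s)
        + (Real.exp (η2 s - c1 * η1 s) - 1 - (η2 s - c1 * η1 s)))
      (-4 * lam2 * (θ * c1 * (Real.sinh (c1 * η1 t / 2)) ^ 2
        + c2 * (Real.sinh ((η2 t - c1 * η1 t) / 2)) ^ 2)) t := by
  set d1 := lam2 * (1 - Real.exp (η2 t)) with hd1def
  set d2 := lam1 * (1 - Real.exp (η1 t)) + ustar -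
        (ustar + lam2 * (-c2 * (Real.exp (-(η2 t - c1 * η1 t)) - 1)
          - θ * c1 * (Real.exp (c1 * η1 t) - 1)
          + lam1 / lam2 * (1 - Real.exp (η1 t))
          - c1 * (1 - Real.exp (η2 t)))) with hd2def
  have hz : HasDerivAt (fun s => η2 s - c1 * η1 s) (d2 - c1 * d1) t := by
    have := hd2.sub ((hd1.const_mul c1))
    exact this
  have ha : HasDerivAt (fun s => -c1 * η1 s) (-c1 * d1) t := hd1.const_mul (-c1)
  have htotal : HasDerivAt (fun s : ℝ =>
        θ * (Real.exp (-c1 * η1 s) - 1 + c1 * η1 s)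
        + (Real.exp (η2 s - c1 * η1 s) - 1 - (η2 s - c1 * η1 s)))
      (θ * (Real.exp (-c1 * η1 t) * (-c1 * d1) + c1 * d1)
        + (Real.exp (η2 t - c1 * η1 t) * (d2 - c1 * d1) - (d2 - c1 * d1))) t := by
    exact (((ha.exp.sub_const 1).add (hd1.const_mul c1)).const_mul θ).add
      ((hz.exp.sub_const 1).sub hz)
  convert htotal using 1
  have hA : Real.exp (η2 t) = Real.exp (η2 t - c1 * η1 t) * Real.exp (c1 * η1 t) := by
    rw [← Real.exp_add]; ring_nf
  have hAinv : Real.exp (-c1 * η1 t) = (Real.exp (c1 * η1 t))⁻¹ := by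
    rw [← Real.exp_neg]; ring_nf
  have hZinv : Real.exp (-(η2 t - c1 * η1 t)) = (Real.exp (η2 t - c1 * η1 t))⁻¹ :=
    Real.exp_neg _
  have key : ∀ q : ℝ, Real.sinh (q / 2) ^ 2 = (Real.exp q + (Real.exp q)⁻¹ - 2) / 4 := by
    intro q
    rw [Real.sinh_eq]
    have h2 : Real.exp (q / 2) * Real.exp (q / 2) = Real.exp q := by
      rw [← Real.exp_add]; ring_nf
    have h3 : Real.exp (-(q / 2)) * Real.exp (-(q / 2)) = (Real.exp q)⁻¹ := by
      rw [← Real.exp_add, ← Real.exp_neg]; ring_nf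
    have h4 : Real.exp (q / 2) * Real.exp (-(q / 2)) = 1 := by
      rw [← Real.exp_add]; simp
    nlinarith [h2, h3, h4]
  have hs1 := key (c1 * η1 t)
  have hs2 := key (η2 t - c1 * η1 t)
  rw [hs1, hs2, hd1def, hd2def, hA, hAinv, hZinv]
  have hApos : Real.exp (c1 * η1 t) ≠ 0 := (Real.exp_pos _).ne'
  have hZpos : Real.exp (η2 t - c1 * η1 t) ≠ 0 := (Real.exp_pos _).ne'
  field_simp
  ring
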